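/- For weights λ, λ' ∈ X and any homogeneous x ∈ U^-, the E_i actions on the Verma modules M_λ and M_{λ+λ'} (both realized on U^-) are related by E_i^λ(x·ξ_λ) = v^{−(i,λ')}·E_i^{λ+λ'}(x·ξ_{λ+λ'}) − v^{−(i, λ+λ'−|x|+α_i)}·[(i,λ')]·_i r̄(x), where _i r̄ is the twisted derivation with _i r̄(1)=0, _i r̄(θ_j)=δ_{ij}, _i r̄(xy) = _i r̄(x)y + v^{(i,−|x|)}x·_i r̄(y). -/
import Mathlib


noncomputable section
open scoped Classical TensorProduct

/-- The field `ℚ(v)` of rational functions over `ℚ`. -/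
abbrev Kq : Type := RatFunc ℚ

/-- The indeterminate `v`. -/
def vq : Kq := RatFunc.X

/-- The quantum integer `[s] = (v^s - v^{-s})/(v - v⁻¹)`. -/
def qint (s : ℤ) : Kq := (vq ^ s - vq ^ (-s)) / (vq - vq⁻¹)

/-- The quantum factorial `[s]!`. -/
def qfact (n : ℕ) : Kq := ∏ k ∈ Finset.range n, qint (k + 1)

/-- The quantum binomial coefficient. -/
def qbinom (s t : ℕ) : Kq := qfact s / (qfact t * qfact (s - t))

/-- A finite graph without loops on vertex set `I`, recorded by the number
`E i j` of edges joining `i` and `j`. -/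
structure GraphData (I : Type) where
  E : I → I → ℕ
  symm : ∀ i j, E i j = E j i
  loopless : ∀ i, E i i = 0

variable {I : Type}

/-- The Cartan pairing `(i,j) = 2δ_{ij} − #{edges between i and j}`. -/
def cart (G : GraphData I) (i j : I) : ℤ := if i = j then 2 else -(G.E i j : ℤ)

/-- The pairing `(i, μ)` of a vertex with an element `μ ∈ ℕ[I]`. -/
def pairing (G : GraphData I) (i : I) (μ : I →₀ ℕ) : ℤ :=
  μ.sum fun j n => (n : ℤ) * cart G i j

/-- The quantum Serre relation element attached to `i ≠ j`. -/
def serreElem (G : GraphData I) (i j : I) : FreeAlgebra Kq I :=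
  ∑ p ∈ Finset.range (2 + G.E i j),
    (((-1 : Kq) ^ p) * qbinom (1 + G.E i j) p) •
      (FreeAlgebra.ι Kq i ^ p * FreeAlgebra.ι Kq j *
        FreeAlgebra.ι Kq i ^ (1 + G.E i j - p))

/-- The quantum Serre relations. -/
inductive SerreRel (G : GraphData I) : FreeAlgebra Kq I → FreeAlgebra Kq I → Prop
  | serre : ∀ i j, i ≠ j → SerreRel G (serreElem G i j) 0

/-- Lusztig's algebra `f = U⁻` attached to the graph `G`: the free algebra on the
generators `θ_i` modulo the quantum Serre relations. -/
abbrev UM (G : GraphData I) : Type := RingQuot (SerreRel G)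

/-- The generator `θ_i` of `U⁻`. -/
def θ (G : GraphData I) (i : I) : UM G :=
  RingQuot.mkAlgHom Kq (SerreRel G) (FreeAlgebra.ι Kq i)

/-- The monomial `θ_{i_1} ⋯ θ_{i_m}`. -/
def word (G : GraphData I) (l : List I) : UM G := (l.map (θ G)).prod

/-- The degree in `ℕ[I]` of a monomial. -/
def degw (l : List I) : I →₀ ℕ := (l.map fun i => Finsupp.single i 1).sum

/-- The homogeneous component of `U⁻` of degree `μ ∈ ℕ[I]`. -/
def homog (G : GraphData I) (μ : I →₀ ℕ) : Submodule Kq (UM G) :=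
  Submodule.span Kq {x | ∃ l : List I, degw l = μ ∧ x = word G l}

-- Auxiliary lemmas
lemma vq_ne : vq ≠ 0 := RatFunc.X_ne_zero

lemma qint_shift (a b : ℤ) :
    qint a = vq ^ (-b) * qint (a + b) - vq ^ (-(a + b)) * qint b := by
  have hX : vq ^ a ≠ 0 := zpow_ne_zero _ vq_ne
  have hY : vq ^ b ≠ 0 := zpow_ne_zero _ vq_ne
  have key : vq ^ a - vq ^ (-a) =
      vq ^ (-b) * (vq ^ (a + b) - vq ^ (-(a + b))) -
        vq ^ (-(a + b)) * (vq ^ b - vq ^ (-b)) := by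
    rw [neg_add, zpow_add₀ vq_ne a b, zpow_add₀ vq_ne (-a) (-b)]
    simp only [zpow_neg]
    field_simp
    ring
  unfold qint
  rw [mul_div_assoc', mul_div_assoc', ← sub_div, ← key]

lemma word_mem_homog (G : GraphData I) (l : List I) :
    word G l ∈ homog G (degw l) :=
  Submodule.subset_span ⟨l, rfl, rfl⟩

lemma theta_mem_homog (G : GraphData I) (j : I) :
    θ G j ∈ homog G (Finsupp.single j 1) := by
  have h := word_mem_homog G [j]
  simpa [word, degw] using h

lemma pairing_add (G : GraphData I) (i : I) (μ ν : I →₀ ℕ) :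
    pairing G i (μ + ν) = pairing G i μ + pairing G i ν := by
  unfold pairing
  apply Finsupp.sum_add_index' (by simp)
  intro j n m
  push_cast
  ring

lemma pairing_single (G : GraphData I) (i j : I) :
    pairing G i (Finsupp.single j 1) = cart G i j := by
  simp [pairing, Finsupp.sum_single_index]

lemma degw_cons (j : I) (l : List I) :
    degw (j :: l) = Finsupp.single j 1 + degw l := by
  simp [degw]

/-- Comparison of the `E_i`-actions on the Verma modules `M_λ` and `M_{λ+λ'}`,
both realized on `U⁻` (weights recorded by `lam i = (i,λ)`, `lam' i = (i,λ')`):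
`E_i^λ(x·ξ_λ) = v^{−(i,λ')}·E_i^{λ+λ'}(x·ξ_{λ+λ'}) − v^{−(i, λ+λ'−|x|+α_i)}·[(i,λ')]·_i r̄(x)`
for homogeneous `x`, where `_i r̄` is the twisted derivation. -/
theorem verma_E_shift (G : GraphData I) (lam lam' : I → ℤ) (i : I)
    (Elam Elam' rbar : UM G →ₗ[Kq] UM G)
    -- `Elam` is the `E_i`-action on `M_λ`:
    (hElam1 : Elam 1 = 0)
    (hElamrec : ∀ (j : I) (μ : I →₀ ℕ) (x : UM G), x ∈ homog G μ →
      Elam (θ G j * x) =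
        θ G j * Elam x + (if i = j then qint (lam i - pairing G i μ) else 0) • x)
    -- `Elam'` is the `E_i`-action on `M_{λ+λ'}`:
    (hElam'1 : Elam' 1 = 0)
    (hElam'rec : ∀ (j : I) (μ : I →₀ ℕ) (x : UM G), x ∈ homog G μ →
      Elam' (θ G j * x) =
        θ G j * Elam' x +
          (if i = j then qint (lam i + lam' i - pairing G i μ) else 0) • x)
    -- `rbar` is the twisted derivation `_i r̄`:
    (hr1 : rbar 1 = 0)
    (hr2 : ∀ j : I, rbar (θ G j) = if i = j then 1 else 0)
    (hr3 : ∀ (μ ν : I →₀ ℕ) (x y : UM G), x ∈ homog G μ → y ∈ homog G ν →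
      rbar (x * y) = rbar x * y + vq ^ (-(pairing G i μ)) • (x * rbar y)) :
    ∀ (μ : I →₀ ℕ) (x : UM G), x ∈ homog G μ →
      Elam x =
        vq ^ (-(lam' i)) • Elam' x -
          (vq ^ (-(lam i + lam' i - pairing G i μ + 2)) * qint (lam' i)) • rbar x := by
  have aux : ∀ l : List I,
      Elam (word G l) =
        vq ^ (-(lam' i)) • Elam' (word G l) -
          (vq ^ (-(lam i + lam' i - pairing G i (degw l) + 2)) * qint (lam' i)) •
            rbar (word G l) := by
    intro l
    induction l with
    | nil =>
        have hw : word G ([] : List I) = 1 := by simp [word]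
        rw [hw, hElam1, hElam'1, hr1, smul_zero, smul_zero, sub_zero]
    | cons j l ih =>
        have hw : word G (j :: l) = θ G j * word G l := by simp [word]
        have hmem := word_mem_homog G l
        have hp : pairing G i (degw (j :: l)) = cart G i j + pairing G i (degw l) := by
          rw [degw_cons, pairing_add, pairing_single]
        rw [hw, hElamrec j (degw l) _ hmem, hElam'rec j (degw l) _ hmem,
          hr3 (Finsupp.single j 1) (degw l) _ _ (theta_mem_homog G j) hmem,
          hr2, ih, hp, pairing_single]
        set W := word G l with hWdef
        set A := Elam' W
        set R := rbar W
        set p := pairing G i (degw l) with hpdef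
        by_cases hij : i = j
        · subst hij
          have hc : cart G i i = 2 := by simp [cart]
          rw [hc, if_pos rfl, if_pos rfl]
          have ea : lam i + lam' i - p = (lam i - p) + lam' i := by ring
          rw [ea, qint_shift (lam i - p) (lam' i)]
          have eK : (-(lam i + lam' i - (2 + p) + 2)) = -((lam i - p) + lam' i) := by ring
          rw [eK]
          have eK' : vq ^ (-(lam i - p + lam' i + 2)) =
              vq ^ (-((lam i - p) + lam' i)) * vq ^ (-(2:ℤ)) := by
            rw [← zpow_add₀ vq_ne]; congr 1; ring
          rw [eK', if_pos rfl]
          simp only [mul_sub, mul_add, mul_smul_comm, smul_add, smul_sub, smul_smul,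
            sub_smul, one_mul, mul_one, add_smul]
          rw [sub_smul (vq ^ (-lam' i) * qint (lam i - p + lam' i))
            (vq ^ (-(lam i - p + lam' i)) * qint (lam' i)) W]
          rw [mul_right_comm (vq ^ (-(lam i - p + lam' i))) (vq ^ (-(2:ℤ))) (qint (lam' i))]
          abel
        · have hnij : ¬ i = j := hij
          rw [if_neg hnij, if_neg hnij, if_neg hnij]
          have eK : vq ^ (-(lam i + lam' i - (cart G i j + p) + 2)) * qint (lam' i) *
              vq ^ (-(cart G i j)) = vq ^ (-(lam i + lam' i - p + 2)) * qint (lam' i) := by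
            rw [mul_right_comm, ← zpow_add₀ vq_ne]
            congr 2
            ring
          simp only [zero_smul, add_zero, zero_mul, smul_add, smul_smul, mul_sub,
            mul_smul_comm, smul_sub, zero_add]
          rw [eK]
  intro μ x hx
  induction hx using Submodule.span_induction with
  | mem x hx =>
      obtain ⟨l, hl, rfl⟩ := hx
      rw [← hl]; exact aux l
  | zero => simp
  | add x y _ _ hx hy =>
      rw [map_add, map_add, map_add, hx, hy, smul_add, smul_add]
      abel
  | smul a x _ hx =>
      rw [map_smul, map_smul, map_smul, hx, smul_sub, smul_smul, smul_smul,
        mul_comm a, mul_comm a, mul_smul, mul_smul]
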